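/- (Symbol estimates for one-sided oscillatory integrals: the remainder term r_+ lies in S^0, with improvement from vanishing of the amplitude.) Let g : ℝ → ℂ be smooth with compact support and let k be a natural number such that g^{(l)}(0) = 0 for all 0 ≤ l ≤ k-1. Define r(c) = ∫_0^∞ e^{icτ} g(τ) dτ. Then r is smooth on ℝ with r^{(n)}(c) = ∫_0^∞ (iτ)^n e^{icτ} g(τ) dτ, and for every natural number n there is a constant C_n such that |r^{(n)}(c)| ≤ C_n (1 + |c|)^{-(k+n+1)} for all c ∈ ℝ. -/

import Mathlib

open MeasureTheory Real Complex Set Filter Topology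

noncomputable def OscInt (h : ℝ → ℂ) (c : ℝ) : ℂ :=
  ∫ τ in Set.Ioi (0:ℝ), Complex.exp (Complex.I * c * τ) * h τ

lemma norm_exp_Icτ (c τ : ℝ) : ‖Complex.exp (Complex.I * c * τ)‖ = 1 := by
  rw [Complex.norm_exp]
  simp [Complex.mul_re]

lemma exp_hasDerivAt (τ c : ℝ) :
    HasDerivAt (fun x : ℝ => Complex.exp (Complex.I * x * τ))
      (Complex.I * τ * Complex.exp (Complex.I * c * τ)) c := by
  have h1 : HasDerivAt (fun x : ℝ => ((x : ℂ))) 1 c := Complex.ofRealCLM.hasDerivAt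
  have h2 : HasDerivAt (fun x : ℝ => Complex.I * x * τ) (Complex.I * τ) c := by
    have := (h1.const_mul Complex.I).mul_const (τ : ℂ)
    simpa [mul_comm, mul_assoc, mul_left_comm] using this
  simpa [mul_comm] using h2.cexp

lemma integrable_exp_mul {h : ℝ → ℂ} (hh : Continuous h) (hc : HasCompactSupport h) (c : ℝ) :
    IntegrableOn (fun τ : ℝ => Complex.exp (Complex.I * c * τ) * h τ) (Set.Ioi (0:ℝ)) := by
  have hcont : Continuous fun τ : ℝ => Complex.exp (Complex.I * c * τ) * h τ := by
    fun_prop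
  exact (hcont.integrable_of_hasCompactSupport hc.mul_left).integrableOn

lemma norm_OscInt_le {h : ℝ → ℂ} (hh : Continuous h) (hc : HasCompactSupport h) (c : ℝ) :
    ‖OscInt h c‖ ≤ ∫ τ in Set.Ioi (0:ℝ), ‖h τ‖ := by
  refine (norm_integral_le_integral_norm _).trans_eq ?_
  refine setIntegral_congr_fun measurableSet_Ioi fun τ _ => ?_
  rw [norm_mul, norm_exp_Icτ, one_mul]

lemma hasDerivAt_OscInt {h : ℝ → ℂ} (hh : Continuous h) (hc : HasCompactSupport h) (c : ℝ) :
    HasDerivAt (OscInt h) (OscInt (fun τ => Complex.I * τ * h τ) c) c := by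
  have key := hasDerivAt_integral_of_dominated_loc_of_deriv_le (μ := volume.restrict (Set.Ioi (0:ℝ)))
    (F := fun (x : ℝ) (τ : ℝ) => Complex.exp (Complex.I * x * τ) * h τ)
    (F' := fun (x : ℝ) (τ : ℝ) => Complex.exp (Complex.I * x * τ) * (Complex.I * τ * h τ))
    (bound := fun τ : ℝ => |τ| * ‖h τ‖) (x₀ := c) (Metric.ball_mem_nhds c one_pos)
    ?_ ?_ ?_ ?_ ?_ ?_
  · exact key.2
  · filter_upwards with x
    exact ((Complex.continuous_exp.comp (by fun_prop)).mul hh).aestronglyMeasurable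
  · exact integrable_exp_mul hh hc c
  · exact ((Complex.continuous_exp.comp (by fun_prop)).mul (by fun_prop)).aestronglyMeasurable
  · filter_upwards with τ
    intro x _
    rw [norm_mul, norm_exp_Icτ, one_mul, norm_mul, norm_mul, Complex.norm_I, one_mul,
      Complex.norm_real, Real.norm_eq_abs]
  · have hbc : Continuous fun τ : ℝ => |τ| * ‖h τ‖ := by fun_prop
    have hbs : HasCompactSupport fun τ : ℝ => |τ| * ‖h τ‖ := hc.norm.mul_left
    exact (hbc.integrable_of_hasCompactSupport hbs).integrableOn
  · filter_upwards with τ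
    intro x _
    have := (exp_hasDerivAt τ x).mul_const (h τ)
    exact this.congr_deriv (by ring)

lemma deriv_OscInt {h : ℝ → ℂ} (hh : Continuous h) (hc : HasCompactSupport h) :
    deriv (OscInt h) = OscInt (fun τ => Complex.I * τ * h τ) := by
  funext c
  exact (hasDerivAt_OscInt hh hc c).deriv

lemma contDiff_OscInt (m : ℕ) :
    ∀ (h : ℝ → ℂ), ContDiff ℝ (⊤ : ℕ∞) h → HasCompactSupport h →
      ContDiff ℝ (m : WithTop ℕ∞) (OscInt h) := by
  induction m with
  | zero =>
    intro h hh hc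
    rw [Nat.cast_zero, contDiff_zero]
    exact continuous_iff_continuousAt.mpr fun c => (hasDerivAt_OscInt hh.continuous hc c).continuousAt
  | succ m ih =>
    intro h hh hc
    have hd : Differentiable ℝ (OscInt h) :=
      fun c => (hasDerivAt_OscInt hh.continuous hc c).differentiableAt
    have h' : ContDiff ℝ (⊤ : ℕ∞) fun τ : ℝ => Complex.I * τ * h τ :=
      (contDiff_const.mul Complex.ofRealCLM.contDiff).mul hh
    have hc' : HasCompactSupport fun τ : ℝ => Complex.I * τ * h τ := hc.mul_left
    have hder := ih _ h' hc'
    rw [← deriv_OscInt hh.continuous hc] at hder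
    rw [show ((m + 1 : ℕ) : WithTop ℕ∞) = (m : WithTop ℕ∞) + 1 by push_cast; ring]
    refine contDiff_succ_iff_deriv.mpr ⟨hd, ?_, hder⟩
    intro hcontra
    exact absurd hcontra (WithTop.natCast_ne_top m)

lemma iteratedDeriv_OscInt (g : ℝ → ℂ) (hg : ContDiff ℝ (⊤ : ℕ∞) g)
    (hgc : HasCompactSupport g) (n : ℕ) :
    iteratedDeriv n (OscInt g) = OscInt (fun τ => (Complex.I * τ) ^ n * g τ) := by
  induction n with
  | zero => simp [iteratedDeriv_zero]
  | succ n ih =>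
    have h' : ContDiff ℝ (⊤ : ℕ∞) fun τ : ℝ => (Complex.I * τ) ^ n * g τ :=
      (((contDiff_const.mul Complex.ofRealCLM.contDiff)).pow n).mul hg
    have hc' : HasCompactSupport fun τ : ℝ => (Complex.I * τ) ^ n * g τ := hgc.mul_left
    rw [iteratedDeriv_succ, ih, deriv_OscInt h'.continuous hc',
      show (fun τ : ℝ => Complex.I * (τ:ℂ) * ((Complex.I * τ) ^ n * g τ))
        = fun τ : ℝ => (Complex.I * τ) ^ (n+1) * g τ from funext fun τ => by ring]

lemma OscInt_ibp {h : ℝ → ℂ} (hh : ContDiff ℝ (⊤ : ℕ∞) h) (hc : HasCompactSupport h)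
    {c : ℝ} (hc0 : c ≠ 0) :
    OscInt h c = -(Complex.I * c)⁻¹ * (h 0 + OscInt (deriv h) c) := by
  set F : ℝ → ℂ := fun τ => Complex.exp (Complex.I * c * τ) * h τ with hF
  set F' : ℝ → ℂ := fun τ => Complex.I * c * Complex.exp (Complex.I * c * τ) * h τ
    + Complex.exp (Complex.I * c * τ) * deriv h τ with hF'
  have hhd : Differentiable ℝ h := hh.differentiable (by simp)
  have hdc : Continuous (deriv h) := (contDiff_infty_iff_deriv.mp (by exact_mod_cast hh)).2.continuous
  have hder : ∀ x ∈ Set.Ici (0:ℝ), HasDerivAt F (F' x) x := by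
    intro x _
    have e1 := exp_hasDerivAt c x
    rw [show (fun y : ℝ => Complex.exp (Complex.I * (y:ℂ) * (c:ℂ)))
      = fun τ : ℝ => Complex.exp (Complex.I * (c:ℂ) * (τ:ℂ)) from funext fun y => by ring_nf] at e1
    exact (e1.congr_deriv (by ring)).mul (hhd x).hasDerivAt
  have hint1 : IntegrableOn (fun τ : ℝ => Complex.I * c * Complex.exp (Complex.I * c * τ) * h τ)
      (Set.Ioi (0:ℝ)) := by
    have : Continuous fun τ : ℝ => Complex.I * c * Complex.exp (Complex.I * c * τ) * h τ := by
      fun_prop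
    exact (this.integrable_of_hasCompactSupport hc.mul_left).integrableOn
  have hint2 : IntegrableOn (fun τ : ℝ => Complex.exp (Complex.I * c * τ) * deriv h τ)
      (Set.Ioi (0:ℝ)) := integrable_exp_mul hdc hc.deriv c
  have hFint : IntegrableOn F' (Set.Ioi (0:ℝ)) := hint1.add hint2
  have hFc : HasCompactSupport F := hc.mul_left
  have htend : Tendsto F atTop (nhds 0) :=
    (hFc.is_zero_at_infty).mono_left _root_.atTop_le_cocompact
  have key := integral_Ioi_of_hasDerivAt_of_tendsto' hder hFint htend
  have hF0 : F 0 = h 0 := by simp [hF]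
  rw [hF0, zero_sub] at key
  have hsplit : ∫ τ in Set.Ioi (0:ℝ), F' τ
      = Complex.I * c * OscInt h c + OscInt (deriv h) c := by
    rw [hF']
    rw [MeasureTheory.integral_add hint1 hint2]
    congr 1
    rw [OscInt, ← MeasureTheory.integral_const_mul]
    exact setIntegral_congr_fun measurableSet_Ioi fun τ _ => by ring
  rw [hsplit] at key
  have hIc : (Complex.I * c) ≠ 0 := by
    simp [Complex.I_ne_zero, Complex.ofReal_eq_zero, hc0]
  rw [show h 0 + OscInt (deriv h) c = -(Complex.I * c) * OscInt h c by linear_combination key]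
  rw [← mul_assoc, neg_mul_neg, inv_mul_cancel₀ hIc, one_mul]

lemma OscInt_decay : ∀ (m : ℕ) (h : ℝ → ℂ), ContDiff ℝ (⊤ : ℕ∞) h → HasCompactSupport h →
    (∀ j < m, iteratedDeriv j h 0 = 0) →
    ∃ C : ℝ, 0 ≤ C ∧ ∀ c : ℝ, c ≠ 0 → ‖OscInt h c‖ ≤ C * (|c| ^ (m + 1))⁻¹ := by
  intro m
  induction m with
  | zero =>
    intro h hh hc _
    have hdc : Continuous (deriv h) :=
      (contDiff_infty_iff_deriv.mp (by exact_mod_cast hh)).2.continuous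
    refine ⟨‖h 0‖ + ∫ τ in Set.Ioi (0:ℝ), ‖deriv h τ‖, by positivity, fun c hc0 => ?_⟩
    rw [OscInt_ibp hh hc hc0]
    have hIc : ‖-(Complex.I * (c:ℂ))⁻¹‖ = |c|⁻¹ := by
      rw [norm_neg, norm_inv, norm_mul, Complex.norm_I, one_mul, Complex.norm_real,
        Real.norm_eq_abs]
    rw [norm_mul, hIc, pow_one, mul_comm]
    gcongr
    refine (norm_add_le _ _).trans ?_
    gcongr
    exact norm_OscInt_le hdc hc.deriv c
  | succ m ih =>
    intro h hh hc hv
    have hh' : ContDiff ℝ (⊤ : ℕ∞) (deriv h) := by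
      exact_mod_cast (contDiff_infty_iff_deriv.mp (by exact_mod_cast hh)).2
    have hc' : HasCompactSupport (deriv h) := hc.deriv
    have hv' : ∀ j < m, iteratedDeriv j (deriv h) 0 = 0 := by
      intro j hj
      rw [← iteratedDeriv_succ']
      exact hv (j+1) (by omega)
    obtain ⟨C, hC0, hC⟩ := ih (deriv h) hh' hc' hv'
    refine ⟨C, hC0, fun c hc0 => ?_⟩
    rw [OscInt_ibp hh hc hc0]
    have h0 : h 0 = 0 := by
      have := hv 0 (by omega)
      rwa [iteratedDeriv_zero] at this
    rw [h0, zero_add, norm_mul, norm_neg, norm_inv, norm_mul, Complex.norm_I, one_mul,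
      Complex.norm_real, Real.norm_eq_abs]
    calc |c|⁻¹ * ‖OscInt (deriv h) c‖ ≤ |c|⁻¹ * (C * (|c| ^ (m + 1))⁻¹) := by
          gcongr; exact hC c hc0
      _ = C * (|c| ^ (m + 1 + 1))⁻¹ := by
          rw [pow_succ, mul_inv]
          ring

lemma iteratedDeriv_mul_id {φ : ℝ → ℂ} (hφ : ContDiff ℝ (⊤ : ℕ∞) φ) (j : ℕ) (x : ℝ) :
    iteratedDeriv (j + 1) (fun τ : ℝ => Complex.I * τ * φ τ) x
      = (j + 1 : ℂ) * (Complex.I * iteratedDeriv j φ x)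
        + Complex.I * x * iteratedDeriv (j + 1) φ x := by
  induction j generalizing x with
  | zero =>
    rw [iteratedDeriv_one]
    have h1 : HasDerivAt (fun τ : ℝ => Complex.I * (τ:ℂ) * φ τ)
        (Complex.I * 1 * φ x + Complex.I * x * deriv φ x) x := by
      have ha : HasDerivAt (fun τ : ℝ => Complex.I * (τ:ℂ)) (Complex.I * 1) x :=
        (Complex.ofRealCLM.hasDerivAt (x := x)).const_mul Complex.I
      exact ha.mul ((hφ.differentiable (by simp)) x).hasDerivAt
    rw [h1.deriv]
    simp [iteratedDeriv_zero, iteratedDeriv_one]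
  | succ j ih =>
    rw [iteratedDeriv_succ]
    have hfun : iteratedDeriv (j + 1) (fun τ : ℝ => Complex.I * τ * φ τ)
        = fun x : ℝ => (j + 1 : ℂ) * (Complex.I * iteratedDeriv j φ x)
          + Complex.I * x * iteratedDeriv (j + 1) φ x := funext fun x => ih x
    rw [hfun]
    have hdiffj : Differentiable ℝ (iteratedDeriv j φ) :=
      hφ.differentiable_iteratedDeriv j (by exact_mod_cast WithTop.coe_lt_top _)
    have hdiffj1 : Differentiable ℝ (iteratedDeriv (j+1) φ) :=
      hφ.differentiable_iteratedDeriv (j+1) (by exact_mod_cast WithTop.coe_lt_top _)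
    have ha : HasDerivAt (iteratedDeriv j φ) (iteratedDeriv (j+1) φ x) x := by
      have h := (hdiffj x).hasDerivAt
      rwa [show iteratedDeriv (j+1) φ x = deriv (iteratedDeriv j φ) x from by
        rw [iteratedDeriv_succ]]
    have hb : HasDerivAt (iteratedDeriv (j+1) φ) (iteratedDeriv (j+1+1) φ x) x := by
      have h := (hdiffj1 x).hasDerivAt
      rwa [show iteratedDeriv (j+1+1) φ x = deriv (iteratedDeriv (j+1) φ) x from by
        rw [iteratedDeriv_succ]]
    have hcc : HasDerivAt (fun x : ℝ => Complex.I * (x:ℂ)) (Complex.I * 1) x :=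
      (Complex.ofRealCLM.hasDerivAt (x := x)).const_mul Complex.I
    have t1 : HasDerivAt (fun x : ℝ => ((j:ℂ)+1) * (Complex.I * iteratedDeriv j φ x))
        (((j:ℂ)+1) * (Complex.I * iteratedDeriv (j+1) φ x)) x :=
      (ha.const_mul Complex.I).const_mul ((j:ℂ)+1)
    have t2 : HasDerivAt (fun x : ℝ => Complex.I * (x:ℂ) * iteratedDeriv (j+1) φ x)
        (Complex.I * 1 * iteratedDeriv (j+1) φ x + Complex.I * (x:ℂ) * iteratedDeriv (j+1+1) φ x)
        x := hcc.mul hb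
    have h1 := t1.add t2
    have h1' : HasDerivAt (fun x : ℝ => ((j:ℂ)+1) * (Complex.I * iteratedDeriv j φ x) + Complex.I * (x:ℂ) * iteratedDeriv (j+1) φ x) _ x := h1
    rw [h1'.deriv]
    push_cast
    ring

lemma vanishing (g : ℝ → ℂ) (hg : ContDiff ℝ (⊤ : ℕ∞) g) (k : ℕ)
    (hvan : ∀ l < k, iteratedDeriv l g 0 = 0) :
    ∀ n : ℕ, ∀ j < k + n, iteratedDeriv j (fun τ : ℝ => (Complex.I * τ) ^ n * g τ) 0 = 0 := by
  intro n
  induction n with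
  | zero =>
    intro j hj
    simpa only [pow_zero, one_mul] using hvan j (by omega)
  | succ n ih =>
    intro j hj
    have hφ : ContDiff ℝ (⊤ : ℕ∞) fun τ : ℝ => (Complex.I * τ) ^ n * g τ :=
      ((contDiff_const.mul Complex.ofRealCLM.contDiff).pow n).mul hg
    have hfun : (fun τ : ℝ => (Complex.I * τ) ^ (n+1) * g τ)
        = fun τ : ℝ => Complex.I * τ * ((Complex.I * τ) ^ n * g τ) :=
      funext fun τ => by ring
    rw [hfun]
    match j with
    | 0 =>
      rw [iteratedDeriv_zero]
      simp
    | (j' + 1) =>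
      rw [iteratedDeriv_mul_id hφ j' 0]
      rw [ih j' (by omega)]
      simp

/-- Symbol estimates for one-sided oscillatory integrals: with `g` smooth, compactly
supported, vanishing to order `k` at `0`, the function `r(c) = ∫_0^∞ e^{icτ} g(τ) dτ`
is smooth, `r^{(n)}(c) = ∫_0^∞ (iτ)^n e^{icτ} g(τ) dτ`, and
`|r^{(n)}(c)| ≤ C_n (1+|c|)^{-(k+n+1)}`. -/
theorem stmt_9 (g : ℝ → ℂ) (hg : ContDiff ℝ (⊤ : ℕ∞) g) (hgc : HasCompactSupport g)
    (k : ℕ) (hvan : ∀ l < k, iteratedDeriv l g 0 = 0)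
    (r : ℝ → ℂ)
    (hr : r = fun c : ℝ => ∫ τ in Set.Ioi (0 : ℝ), Complex.exp (Complex.I * c * τ) * g τ) :
    ContDiff ℝ (⊤ : ℕ∞) r ∧
    (∀ (n : ℕ) (c : ℝ),
      iteratedDeriv n r c
        = ∫ τ in Set.Ioi (0 : ℝ), (Complex.I * τ) ^ n * Complex.exp (Complex.I * c * τ) * g τ) ∧
    (∀ n : ℕ, ∃ C : ℝ, ∀ c : ℝ,
      ‖iteratedDeriv n r c‖ ≤ C * ((1 + |c|) ^ (k + n + 1))⁻¹) := by
  have hrA : r = OscInt g := hr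
  have hsm : ∀ n : ℕ, ContDiff ℝ (⊤ : ℕ∞) fun τ : ℝ => (Complex.I * τ) ^ n * g τ :=
    fun n => ((contDiff_const.mul Complex.ofRealCLM.contDiff).pow n).mul hg
  have hcs : ∀ n : ℕ, HasCompactSupport fun τ : ℝ => (Complex.I * τ) ^ n * g τ :=
    fun n => hgc.mul_left
  refine ⟨?_, ?_, ?_⟩
  · rw [hrA]
    exact contDiff_infty.mpr fun n => contDiff_OscInt n g hg hgc
  · intro n c
    rw [hrA, iteratedDeriv_OscInt g hg hgc n, OscInt]
    exact setIntegral_congr_fun measurableSet_Ioi fun τ _ => by ring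
  · intro n
    set m := k + n + 1 with hm
    obtain ⟨C₁, hC₁0, hC₁⟩ := OscInt_decay (k + n) _ (hsm n) (hcs n) (vanishing g hg k hvan n)
    set C₀ : ℝ := ∫ τ in Set.Ioi (0:ℝ), ‖(Complex.I * (τ:ℂ)) ^ n * g τ‖ with hC₀
    have hC₀0 : 0 ≤ C₀ := integral_nonneg fun τ => norm_nonneg _
    have hbd0 : ∀ c : ℝ, ‖OscInt (fun τ : ℝ => (Complex.I * τ) ^ n * g τ) c‖ ≤ C₀ :=
      fun c => norm_OscInt_le (hsm n).continuous (hcs n) c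
    refine ⟨2 ^ m * max C₀ C₁, fun c => ?_⟩
    rw [hrA, iteratedDeriv_OscInt g hg hgc n]
    rcases le_or_gt |c| 1 with hcle | hclt
    · calc ‖OscInt (fun τ : ℝ => (Complex.I * τ) ^ n * g τ) c‖ ≤ C₀ := hbd0 c
        _ ≤ max C₀ C₁ := le_max_left _ _
        _ = 2 ^ m * max C₀ C₁ * ((2:ℝ) ^ m)⁻¹ := by
            field_simp
        _ ≤ 2 ^ m * max C₀ C₁ * ((1 + |c|) ^ m)⁻¹ := by
            gcongr
            all_goals first | positivity | linarith [abs_nonneg c]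
    · have hc0 : c ≠ 0 := by
        intro h; rw [h, abs_zero] at hclt; linarith
      calc ‖OscInt (fun τ : ℝ => (Complex.I * τ) ^ n * g τ) c‖
          ≤ C₁ * (|c| ^ m)⁻¹ := hC₁ c hc0
        _ ≤ max C₀ C₁ * (|c| ^ m)⁻¹ := by gcongr; exact le_max_right _ _
        _ = 2 ^ m * max C₀ C₁ * ((2 * |c|) ^ m)⁻¹ := by
            rw [mul_pow, mul_inv]
            field_simp
        _ ≤ 2 ^ m * max C₀ C₁ * ((1 + |c|) ^ m)⁻¹ := by
            gcongr
            all_goals first | positivity | linarith
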